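/- Fix e ∈ [0,1) and suppose β₁ < β₂ in (0,1) are such that, for β ∈ [0,1], det(γ_{β,e}(2π) + I₂) = 0 holds exactly when β ∈ {β₁, β₂}. Then for i = 1, 2 the matrix M = γ_{β_i,e}(2π) has −1 as a double eigenvalue (tr M = −2 and det M = 1), M ≠ −I₂, and M is not diagonalizable over ℂ; consequently M is spectrally stable (all eigenvalues have modulus 1) but linearly unstable: sup_{n∈ℕ} ‖Mⁿ‖ = ∞. -/

import Mathlib

open Real Matrix

attribute [local instance] Matrix.normedAddCommGroup

noncomputable section

/-- The standard symplectic matrix `J = [[0,-1],[1,0]]`. -/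
def Jmat : Matrix (Fin 2) (Fin 2) ℝ := !![0, -1; 1, 0]

/-- The coefficient matrix `B_{β,e}(t) = diag(1, 1 - β/(1 + e cos t))`. -/
def Bmat (β e t : ℝ) : Matrix (Fin 2) (Fin 2) ℝ :=
  !![1, 0; 0, 1 - β / (1 + e * Real.cos t)]

/-- `γ` is the fundamental solution of `γ' = J B_{β,e} γ`, `γ(0) = I₂`
(derivative taken entrywise). -/
def IsFundSol (β e : ℝ) (γ : ℝ → Matrix (Fin 2) (Fin 2) ℝ) : Prop :=
  γ 0 = 1 ∧ ∀ (t : ℝ) (i j : Fin 2),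
    HasDerivAt (fun s => γ s i j) ((Jmat * Bmat β e t * γ t) i j) t

/-- The trace-formula function `f(β,-1)`. -/
def fTrace (β : ℝ) : ℝ :=
  β ^ 2 / (2 * (1 - β)) *
    ∫ s in (π / 2)..(3 * π / 2), ∫ t in (π / 2)..(3 * π / 2),
      Real.cos s * Real.cos t *
        (Real.cos (2 * π * Real.sqrt (1 - β) * (s - t)) ^ 2 /
            Real.cos (π * Real.sqrt (1 - β)) ^ 2 -
          Real.cos (4 * π * Real.sqrt (1 - β) * (s - t + 1 / 4)) /
            Real.cos (π * Real.sqrt (1 - β)))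


attribute [local instance] Matrix.normedSpace

section AuxiliaryLemmas


lemma abs_cos_sq_sub_le (a b : ℝ) : |Real.cos a ^ 2 - Real.cos b ^ 2| ≤ |a - b| := by
  have hd : ∀ x : ℝ, HasDerivAt (fun x => Real.cos x ^ 2) (2 * Real.cos x * -Real.sin x) x := by
    intro x
    simpa using (Real.hasDerivAt_cos x).fun_pow 2
  have := Convex.norm_image_sub_le_of_norm_deriv_le (f := fun x => Real.cos x ^ 2)
    (s := Set.univ) (C := 1) (fun x _ => (hd x).differentiableAt)
    (fun x _ => by
      rw [(hd x).deriv]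
      have h1 : |2 * Real.cos x * -Real.sin x| = |Real.sin (2 * x)| := by
        rw [Real.sin_two_mul, abs_mul, abs_mul, abs_mul, abs_mul, abs_neg]; ring
      simp only [Real.norm_eq_abs]
      rw [h1]; exact Real.abs_sin_le_one _)
    convex_univ (Set.mem_univ b) (Set.mem_univ a)
  simpa [Real.norm_eq_abs] using this

lemma eventually_gt_right {f : ℝ → ℝ} {c x : ℝ} (hf : HasDerivAt f c x) (hc : 0 < c) :
    ∀ᶠ t in nhdsWithin x (Set.Ioi x), f x < f t := by
  have h := hasDerivAt_iff_tendsto_slope.mp hf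
  have h2 : ∀ᶠ t in nhdsWithin x {x}ᶜ, 0 < slope f x t := h.eventually (eventually_gt_nhds hc)
  have h3 : nhdsWithin x (Set.Ioi x) ≤ nhdsWithin x {x}ᶜ :=
    nhdsWithin_mono x (fun t ht => ne_of_gt ht)
  filter_upwards [h3 h2, self_mem_nhdsWithin] with t ht hmem
  have hxt : 0 < t - x := sub_pos.mpr hmem
  have : 0 < (f t - f x) / (t - x) := by rwa [slope_def_field] at ht; 
  nlinarith [mul_pos this hxt, div_mul_cancel₀ (f t - f x) (ne_of_gt hxt)]

lemma eventually_lt_left {f : ℝ → ℝ} {c x : ℝ} (hf : HasDerivAt f c x) (hc : 0 < c) :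
    ∀ᶠ t in nhdsWithin x (Set.Iio x), f t < f x := by
  have h := hasDerivAt_iff_tendsto_slope.mp hf
  have h2 : ∀ᶠ t in nhdsWithin x {x}ᶜ, 0 < slope f x t := h.eventually (eventually_gt_nhds hc)
  have h3 : nhdsWithin x (Set.Iio x) ≤ nhdsWithin x {x}ᶜ :=
    nhdsWithin_mono x (fun t ht => ne_of_lt ht)
  filter_upwards [h3 h2, self_mem_nhdsWithin] with t ht hmem
  have hxt : t - x < 0 := sub_neg.mpr hmem
  have hslope : 0 < (f t - f x) / (t - x) := by rwa [slope_def_field] at ht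
  nlinarith [div_mul_cancel₀ (f t - f x) (ne_of_lt hxt), mul_neg_of_pos_of_neg hslope hxt]

lemma barrier {θ dfun : ℝ → ℝ}
    (hode : ∀ t, HasDerivAt θ (Real.cos (θ t) ^ 2 + dfun t * Real.sin (θ t) ^ 2) t)
    {m : ℝ} (hm : Real.sin m = 0) (h0 : m ≤ θ 0) : ∀ t, 0 < t → m < θ t := by
  have hθd : Differentiable ℝ θ := fun t => (hode t).differentiableAt
  have hθc : Continuous θ := hθd.continuous
  have hder1 : ∀ τ, θ τ = m → HasDerivAt θ 1 τ := by
    intro τ hτ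
    have h1 : Real.cos (θ τ) ^ 2 + dfun τ * Real.sin (θ τ) ^ 2 = 1 := by
      rw [hτ, hm]; nlinarith [Real.sin_sq_add_cos_sq m]
    exact h1 ▸ hode τ
  have stepA : ∀ t, 0 ≤ t → m ≤ θ t := by
    by_contra hcon
    push_neg at hcon
    obtain ⟨t₂, ht₂0, ht₂⟩ := hcon
    set S : Set ℝ := Set.Icc 0 t₂ ∩ {t | m ≤ θ t} with hSdef
    have hScl : IsClosed S := isClosed_Icc.inter (isClosed_le continuous_const hθc)
    have hScomp : IsCompact S := isCompact_Icc.of_isClosed_subset hScl Set.inter_subset_left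
    have hS0 : (0 : ℝ) ∈ S := ⟨⟨le_refl 0, ht₂0⟩, h0⟩
    set τ := sSup S with hτdef
    have hτS : τ ∈ S := hScomp.sSup_mem ⟨0, hS0⟩
    have hτm : m ≤ θ τ := hτS.2
    have hτ0 : 0 ≤ τ := hτS.1.1
    have hτ2 : τ ≤ t₂ := hτS.1.2
    have hτlt : τ < t₂ := lt_of_le_of_ne hτ2 (fun h => absurd (h ▸ hτm) (not_le.mpr ht₂))
    have hIoc : ∀ t ∈ Set.Ioc τ t₂, θ t < m := by
      rintro t ⟨h1, h2⟩
      by_contra hh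
      push_neg at hh
      have htS : t ∈ S := ⟨⟨le_trans hτ0 h1.le, h2⟩, hh⟩
      have := le_csSup hScomp.bddAbove htS
      linarith
    have hθτle : θ τ ≤ m := by
      have ht : Filter.Tendsto θ (nhdsWithin τ (Set.Ioi τ)) (nhds (θ τ)) :=
        (hθc.continuousAt).tendsto.mono_left nhdsWithin_le_nhds
      refine le_of_tendsto ht ?_
      filter_upwards [Ioc_mem_nhdsGT_of_mem ⟨le_refl τ, hτlt⟩] with t ht
      exact (hIoc t ht).le
    have hθτ : θ τ = m := le_antisymm hθτle hτm
    have hev := eventually_gt_right (hder1 τ hθτ) one_pos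
    have hmem : Set.Ioc τ t₂ ∈ nhdsWithin τ (Set.Ioi τ) :=
      Ioc_mem_nhdsGT_of_mem ⟨le_refl τ, hτlt⟩
    obtain ⟨t, ht1, ht2⟩ := (hev.and (Filter.eventually_of_mem hmem (fun t ht => hIoc t ht))).exists
    rw [hθτ] at ht1
    linarith
  intro t ht
  rcases lt_or_eq_of_le (stepA t ht.le) with h | h
  · exact h
  · exfalso
    have hev := eventually_lt_left (hder1 t h.symm) one_pos
    have hmem : Set.Ioo 0 t ∈ nhdsWithin t (Set.Iio t) :=
      Ioo_mem_nhdsLT_of_mem ⟨ht, le_refl t⟩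
    obtain ⟨s, hs1, hs2⟩ := (hev.and (Filter.eventually_of_mem hmem (fun s hs => stepA s hs.1.le))).exists
    rw [← h] at hs1
    linarith

lemma sturm_compare {θ₁ θ₂ d₁ d₂ : ℝ → ℝ} {K T : ℝ}
    (hode₁ : ∀ t, HasDerivAt θ₁ (Real.cos (θ₁ t) ^ 2 + d₁ t * Real.sin (θ₁ t) ^ 2) t)
    (hode₂ : ∀ t, HasDerivAt θ₂ (Real.cos (θ₂ t) ^ 2 + d₂ t * Real.sin (θ₂ t) ^ 2) t)
    (hK : ∀ t, |1 - d₂ t| ≤ K)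
    (hgt : ∀ t, d₂ t < d₁ t)
    (h0 : θ₁ 0 = θ₂ 0) (hT : 0 < T) : θ₂ T < θ₁ T := by
  set v₁ : ℝ → ℝ := fun t => Real.cos (θ₁ t) ^ 2 + d₁ t * Real.sin (θ₁ t) ^ 2 with hv₁
  set v₂ : ℝ → ℝ := fun t => Real.cos (θ₂ t) ^ 2 + d₂ t * Real.sin (θ₂ t) ^ 2 with hv₂
  set D : ℝ → ℝ := fun t => θ₁ t - θ₂ t with hDdef
  have hD' : ∀ t, HasDerivAt D (v₁ t - v₂ t) t := fun t => (hode₁ t).sub (hode₂ t)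
  have hDd : Differentiable ℝ D := fun t => (hD' t).differentiableAt
  have hDc : Continuous D := hDd.continuous
  have hD0 : D 0 = 0 := by simp [hDdef, h0]
  have key : ∀ t, (d₁ t - d₂ t) * Real.sin (θ₁ t) ^ 2 - K * |D t| ≤ v₁ t - v₂ t := by
    intro t
    have e1 := Real.sin_sq_add_cos_sq (θ₁ t)
    have e2 := Real.sin_sq_add_cos_sq (θ₂ t)
    have h1 : v₁ t - v₂ t = (d₁ t - d₂ t) * Real.sin (θ₁ t) ^ 2
        + (1 - d₂ t) * (Real.cos (θ₁ t) ^ 2 - Real.cos (θ₂ t) ^ 2) := by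
      simp only [hv₁, hv₂]
      linear_combination (d₂ t) * e1 - (d₂ t) * e2
    have h2 : |(1 - d₂ t) * (Real.cos (θ₁ t) ^ 2 - Real.cos (θ₂ t) ^ 2)| ≤ K * |D t| := by
      rw [abs_mul]
      exact mul_le_mul (hK t) (abs_cos_sq_sub_le _ _) (abs_nonneg _)
        (le_trans (abs_nonneg _) (hK t))
    have h3 := neg_abs_le ((1 - d₂ t) * (Real.cos (θ₁ t) ^ 2 - Real.cos (θ₂ t) ^ 2))
    linarith
  -- Step 1 : D is nonnegative on [0, T]
  have step1 : ∀ t ∈ Set.Icc (0:ℝ) T, 0 ≤ D t := by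
    by_contra hcon
    push_neg at hcon
    obtain ⟨t₂, ht₂mem, ht₂⟩ := hcon
    set S : Set ℝ := Set.Icc 0 t₂ ∩ {t | 0 ≤ D t} with hSdef
    have hScl : IsClosed S := isClosed_Icc.inter (isClosed_le continuous_const hDc)
    have hScomp : IsCompact S := isCompact_Icc.of_isClosed_subset hScl Set.inter_subset_left
    have hS0 : (0:ℝ) ∈ S := ⟨⟨le_refl 0, ht₂mem.1⟩, le_of_eq hD0.symm⟩
    set τ := sSup S with hτdef
    have hτS : τ ∈ S := hScomp.sSup_mem ⟨0, hS0⟩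
    have hτm : 0 ≤ D τ := hτS.2
    have hτ0 : 0 ≤ τ := hτS.1.1
    have hτlt : τ < t₂ := lt_of_le_of_ne hτS.1.2 (fun h => absurd (h ▸ hτm) (not_le.mpr ht₂))
    have hIoc : ∀ t ∈ Set.Ioc τ t₂, D t < 0 := by
      rintro t ⟨h1, h2⟩
      by_contra hh
      push_neg at hh
      have htS : t ∈ S := ⟨⟨le_trans hτ0 h1.le, h2⟩, hh⟩
      have := le_csSup hScomp.bddAbove htS
      linarith
    have hDτ : D τ = 0 := by
      refine le_antisymm ?_ hτm
      have ht : Filter.Tendsto D (nhdsWithin τ (Set.Ioi τ)) (nhds (D τ)) :=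
        (hDc.continuousAt).tendsto.mono_left nhdsWithin_le_nhds
      refine le_of_tendsto ht ?_
      filter_upwards [Ioc_mem_nhdsGT_of_mem ⟨le_refl τ, hτlt⟩] with t ht
      exact (hIoc t ht).le
    have hDle : ∀ t ∈ Set.Icc τ t₂, D t ≤ 0 := by
      rintro t ⟨h1, h2⟩
      rcases eq_or_lt_of_le h1 with h | h
      · exact le_of_eq (h ▸ hDτ)
      · exact (hIoc t ⟨h, h2⟩).le
    set E : ℝ → ℝ := fun t => Real.exp (-(K * t)) * D t with hEdef
    have hE' : ∀ t, HasDerivAt E (Real.exp (-(K * t)) * ((v₁ t - v₂ t) - K * D t)) t := by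
      intro t
      have ha : HasDerivAt (fun t : ℝ => -(K * t)) (-K) t := by
        simpa using (((hasDerivAt_id t).const_mul K).fun_neg)
      have := (ha.exp).fun_mul (hD' t)
      refine this.congr_deriv ?_
      ring
    have hmono : MonotoneOn E (Set.Icc τ t₂) := by
      have hEd : Differentiable ℝ E := fun t => (hE' t).differentiableAt
      apply monotoneOn_of_deriv_nonneg (convex_Icc τ t₂) hEd.continuous.continuousOn
        hEd.differentiableOn
      intro x hx
      rw [interior_Icc] at hx
      rw [(hE' x).deriv]
      have hxle : D x ≤ 0 := hDle x ⟨hx.1.le, hx.2.le⟩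
      have habs : |D x| = -D x := abs_of_nonpos hxle
      have hk := key x
      have hs : 0 ≤ (d₁ x - d₂ x) * Real.sin (θ₁ x) ^ 2 :=
        mul_nonneg (by linarith [hgt x]) (sq_nonneg _)
      have : 0 ≤ (v₁ x - v₂ x) - K * D x := by rw [habs] at hk; linarith
      positivity
    have h1 := hmono ⟨le_refl τ, hτlt.le⟩ ⟨hτlt.le, le_refl t₂⟩ hτlt.le
    have hEτ : E τ = 0 := by simp [hEdef, hDτ]
    have hEt₂ : E t₂ < 0 := mul_neg_of_pos_of_neg (Real.exp_pos _) ht₂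
    linarith
  -- Step 2 : strictness
  by_contra hc
  push_neg at hc
  have hDT : D T = 0 :=
    le_antisymm (by simp only [hDdef]; linarith) (step1 T ⟨hT.le, le_refl T⟩)
  set E₂ : ℝ → ℝ := fun t => Real.exp (K * t) * D t with hE₂def
  have hE₂' : ∀ t, HasDerivAt E₂ (Real.exp (K * t) * ((v₁ t - v₂ t) + K * D t)) t := by
    intro t
    have ha : HasDerivAt (fun t : ℝ => K * t) K t := by
      simpa using ((hasDerivAt_id t).const_mul K)
    have := (ha.exp).fun_mul (hD' t)
    refine this.congr_deriv ?_
    ring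
  have hderiv_nonneg : ∀ x ∈ Set.Icc (0:ℝ) T, 0 ≤ (v₁ x - v₂ x) + K * D x := by
    intro x hx
    have hxge : 0 ≤ D x := step1 x hx
    have habs : |D x| = D x := abs_of_nonneg hxge
    have hk := key x
    have hs : 0 ≤ (d₁ x - d₂ x) * Real.sin (θ₁ x) ^ 2 :=
      mul_nonneg (by linarith [hgt x]) (sq_nonneg _)
    rw [habs] at hk
    linarith
  have hmono : MonotoneOn E₂ (Set.Icc (0:ℝ) T) := by
    have hEd : Differentiable ℝ E₂ := fun t => (hE₂' t).differentiableAt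
    apply monotoneOn_of_deriv_nonneg (convex_Icc 0 T) hEd.continuous.continuousOn
      hEd.differentiableOn
    intro x hx
    rw [interior_Icc] at hx
    rw [(hE₂' x).deriv]
    exact mul_nonneg (Real.exp_pos _).le (hderiv_nonneg x ⟨hx.1.le, hx.2.le⟩)
  have hE₂0 : E₂ 0 = 0 := by simp [hE₂def, hD0]
  have hE₂T : E₂ T = 0 := by simp [hE₂def, hDT]
  have hDzero : ∀ t ∈ Set.Icc (0:ℝ) T, D t = 0 := by
    intro t htmem
    have h1 := hmono (Set.left_mem_Icc.mpr hT.le) htmem htmem.1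
    have h2 := hmono htmem (Set.right_mem_Icc.mpr hT.le) htmem.2
    rw [hE₂0] at h1; rw [hE₂T] at h2
    have : E₂ t = 0 := le_antisymm h2 h1
    have hexp : Real.exp (K * t) ≠ 0 := (Real.exp_pos _).ne'
    simpa [hE₂def, hexp] using this
  have hsin : ∀ t ∈ Set.Ioo (0:ℝ) T, Real.sin (θ₁ t) = 0 := by
    intro t htmem
    have hloc : D =ᶠ[nhds t] (fun _ => 0) := by
      filter_upwards [isOpen_Ioo.mem_nhds htmem] with s hs
      exact hDzero s ⟨hs.1.le, hs.2.le⟩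
    have hzero : HasDerivAt D 0 t := (hasDerivAt_const t (0:ℝ)).congr_of_eventuallyEq hloc
    have huniq : v₁ t - v₂ t = 0 := (hD' t).unique hzero
    have hθeq : θ₁ t = θ₂ t := sub_eq_zero.mp (hDzero t ⟨htmem.1.le, htmem.2.le⟩)
    have : (d₁ t - d₂ t) * Real.sin (θ₁ t) ^ 2 = 0 := by
      simp only [hv₁, hv₂, ← hθeq] at huniq
      linarith [huniq]
    have hne : d₁ t - d₂ t ≠ 0 := ne_of_gt (by linarith [hgt t])
    have := (mul_eq_zero.mp this).resolve_left hne
    exact pow_eq_zero_iff (n := 2) (by norm_num) |>.mp this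
  have ht₀mem : T / 2 ∈ Set.Ioo (0:ℝ) T := ⟨half_pos hT, half_lt_self hT⟩
  set t₀ := T / 2
  have hg0 : (fun s => Real.sin (θ₁ s)) =ᶠ[nhds t₀] (fun _ => 0) := by
    filter_upwards [isOpen_Ioo.mem_nhds ht₀mem] with s hs
    exact hsin s hs
  have hgz : HasDerivAt (fun s => Real.sin (θ₁ s)) 0 t₀ :=
    (hasDerivAt_const t₀ (0:ℝ)).congr_of_eventuallyEq hg0
  have hgd : HasDerivAt (fun s => Real.sin (θ₁ s)) (Real.cos (θ₁ t₀) * (v₁ t₀)) t₀ :=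
    (Real.hasDerivAt_sin (θ₁ t₀)).comp t₀ (hode₁ t₀)
  have huniq : Real.cos (θ₁ t₀) * v₁ t₀ = 0 := hgd.unique hgz
  have hsin0 : Real.sin (θ₁ t₀) = 0 := hsin t₀ ht₀mem
  have hcos1 : Real.cos (θ₁ t₀) ^ 2 = 1 := by
    nlinarith [Real.sin_sq_add_cos_sq (θ₁ t₀)]
  have hv1 : v₁ t₀ = 1 := by simp only [hv₁]; rw [hsin0]; nlinarith
  rw [hv1, mul_one] at huniq
  nlinarith [hcos1, huniq]

lemma denom_pos {e : ℝ} (he0 : 0 ≤ e) (he1 : e < 1) (t : ℝ) : 0 < 1 + e * Real.cos t := by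
  nlinarith [Real.neg_one_le_cos t, Real.cos_le_one t]

lemma JB_mul_entries (β e t : ℝ) (X : Matrix (Fin 2) (Fin 2) ℝ) :
    Jmat * Bmat β e t * X =
      !![-(1 - β / (1 + e * Real.cos t)) * X 1 0, -(1 - β / (1 + e * Real.cos t)) * X 1 1;
         X 0 0, X 0 1] := by
  ext i j
  fin_cases i <;> fin_cases j <;>
    simp [Jmat, Bmat, Matrix.mul_apply, Fin.sum_univ_two]

lemma fund_det {β e : ℝ} {γ : ℝ → Matrix (Fin 2) (Fin 2) ℝ} (hγ : IsFundSol β e γ) (t : ℝ) :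
    γ t 0 0 * γ t 1 1 - γ t 0 1 * γ t 1 0 = 1 := by
  set g : ℝ → ℝ := fun t => γ t 0 0 * γ t 1 1 - γ t 0 1 * γ t 1 0 with hgdef
  have hg : ∀ t, HasDerivAt g 0 t := by
    intro t
    have h00 := hγ.2 t 0 0
    have h01 := hγ.2 t 0 1
    have h10 := hγ.2 t 1 0
    have h11 := hγ.2 t 1 1
    rw [JB_mul_entries] at h00 h01 h10 h11
    simp at h00 h01 h10 h11
    have := ((h00.fun_mul h11).fun_sub (h01.fun_mul h10))
    refine this.congr_deriv ?_
    ring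
  have hconst := is_const_of_deriv_eq_zero (fun t => (hg t).differentiableAt)
    (fun t => (hg t).deriv) t 0
  have hg0 : g 0 = 1 := by
    simp only [hgdef, hγ.1]
    norm_num [Matrix.one_apply]
  rw [← hg0]; exact hconst

lemma exp_eq_neg_one_im {z : ℂ} (h : Complex.exp z = -1) : ∃ n : ℤ, z.im = π + 2*π*n := by
  have h2 : Complex.exp (z - π * Complex.I) = 1 := by
    rw [Complex.exp_sub, Complex.exp_pi_mul_I, h]; norm_num
  obtain ⟨n, hn⟩ := Complex.exp_eq_one_iff.mp h2
  refine ⟨n, ?_⟩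
  have := congrArg Complex.im hn
  simp at this
  linarith [this]

lemma advance_pi {e β : ℝ} (he0 : 0 ≤ e) (he1 : e < 1) (hβ0 : 0 < β) (hβ1 : β ≤ 1)
    {γ : ℝ → Matrix (Fin 2) (Fin 2) ℝ} (hγ : IsFundSol β e γ)
    {w : Fin 2 → ℝ} (hw : w ≠ 0) (hev : (γ (2*π)).mulVec w = -w) :
    ∃ θ : ℝ → ℝ,
      θ 0 = Complex.arg ((w 0 : ℂ) + (w 1 : ℂ) * Complex.I) ∧
      (∀ t, HasDerivAt θ
        (Real.cos (θ t) ^ 2 + (1 - β / (1 + e * Real.cos t)) * Real.sin (θ t) ^ 2) t) ∧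
      θ (2*π) = θ 0 + π := by
  classical
  set dd : ℝ → ℝ := fun t => 1 - β / (1 + e * Real.cos t) with hdddef
  have hden := denom_pos he0 he1
  -- the vector solution
  set c0 : ℝ → ℝ := fun t => γ t 0 0 * w 0 + γ t 0 1 * w 1 with hc0def
  set c1 : ℝ → ℝ := fun t => γ t 1 0 * w 0 + γ t 1 1 * w 1 with hc1def
  have hc0' : ∀ t, HasDerivAt c0 (-(dd t) * c1 t) t := by
    intro t
    have h00 := hγ.2 t 0 0
    have h01 := hγ.2 t 0 1
    rw [JB_mul_entries] at h00 h01
    simp at h00 h01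
    have := (h00.mul_const (w 0)).fun_add (h01.mul_const (w 1))
    refine this.congr_deriv ?_
    simp only [hdddef, hc1def]; ring
  have hc1' : ∀ t, HasDerivAt c1 (c0 t) t := by
    intro t
    have h10 := hγ.2 t 1 0
    have h11 := hγ.2 t 1 1
    rw [JB_mul_entries] at h10 h11
    simp at h10 h11
    have := (h10.mul_const (w 0)).fun_add (h11.mul_const (w 1))
    convert this using 1
  have hdet := fund_det hγ
  -- complex curve
  set z : ℝ → ℂ := fun t => (c0 t : ℂ) + (c1 t : ℂ) * Complex.I with hzdef
  set zd : ℝ → ℂ := fun t => ((-(dd t) * c1 t : ℝ) : ℂ) + ((c0 t : ℝ) : ℂ) * Complex.I with hzddef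
  have hz' : ∀ t, HasDerivAt z (zd t) t := by
    intro t
    exact ((hc0' t).ofReal_comp).add (((hc1' t).ofReal_comp).mul_const Complex.I)
  have hzre : ∀ t, (z t).re = c0 t := by intro t; simp [hzdef]
  have hzim : ∀ t, (z t).im = c1 t := by intro t; simp [hzdef]
  have hmulvec : ∀ t, (γ t).mulVec w = fun i => if i = 0 then c0 t else c1 t := by
    intro t
    funext i
    fin_cases i <;> simp [Matrix.mulVec, dotProduct, Fin.sum_univ_two, hc0def, hc1def]
  have hzne : ∀ t, z t ≠ 0 := by
    intro t h
    have h0 : c0 t = 0 := by rw [← hzre t, h]; simp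
    have h1 : c1 t = 0 := by rw [← hzim t, h]; simp
    have hmv : (γ t).mulVec w = 0 := by
      rw [hmulvec t]; funext i; fin_cases i <;> simp [h0, h1]
    have hunit : IsUnit (γ t).det := by
      rw [Matrix.det_fin_two, hdet t]; exact isUnit_one
    have : w = 0 := by
      have e1 : ((γ t)⁻¹ * γ t).mulVec w = (γ t)⁻¹.mulVec ((γ t).mulVec w) :=
        (Matrix.mulVec_mulVec w _ _).symm
      rw [Matrix.nonsing_inv_mul _ hunit, Matrix.one_mulVec, hmv, Matrix.mulVec_zero] at e1
      exact e1
    exact hw this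
  -- continuity
  have hc0d : Differentiable ℝ c0 := fun t => (hc0' t).differentiableAt
  have hc1d : Differentiable ℝ c1 := fun t => (hc1' t).differentiableAt
  have hc0c : Continuous c0 := hc0d.continuous
  have hc1c : Continuous c1 := hc1d.continuous
  have hddc : Continuous dd := by
    apply continuous_const.sub
    exact continuous_const.div (continuous_const.add (continuous_const.mul Real.continuous_cos))
      (fun t => (hden t).ne')
  have hzd' : Differentiable ℝ z := fun t => (hz' t).differentiableAt
  have hzc : Continuous z := hzd'.continuous
  have hzdc : Continuous zd := by
    apply Continuous.add
    · exact Complex.continuous_ofReal.comp ((hddc.neg).mul hc1c)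
    · exact (Complex.continuous_ofReal.comp hc0c).mul continuous_const
  set g : ℝ → ℂ := fun s => zd s / z s with hgdef
  have hgc : Continuous g := hzdc.div hzc hzne
  set L : ℝ → ℂ := fun t => ∫ s in (0:ℝ)..t, g s with hLdef
  have hL : ∀ t, HasDerivAt L (g t) t := fun t =>
    intervalIntegral.integral_hasDerivAt_right (hgc.intervalIntegrable _ _)
      (hgc.stronglyMeasurableAtFilter _ _) hgc.continuousAt
  have hL0 : L 0 = 0 := intervalIntegral.integral_same
  -- z t = z 0 * exp (L t)
  have hzL : ∀ t, z t = z 0 * Complex.exp (L t) := by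
    have hF : ∀ t, HasDerivAt (fun t => z t * Complex.exp (-(L t))) 0 t := by
      intro t
      have := (hz' t).fun_mul (((hL t).fun_neg).cexp)
      refine this.congr_deriv ?_
      field_simp [hgdef, hzne t]
      simp only [hgdef]; field_simp [hzne t]
      ring
    have hconst := fun t => is_const_of_deriv_eq_zero
      (fun s => (hF s).differentiableAt) (fun s => (hF s).deriv) t 0
    intro t
    have h := hconst t
    simp only [hL0, neg_zero, Complex.exp_zero, mul_one] at h
    have hexp : Complex.exp (-(L t)) ≠ 0 := Complex.exp_ne_zero _
    have := congrArg (fun x => x * Complex.exp (L t)) h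
    simpa [mul_assoc, ← Complex.exp_add, Complex.exp_zero] using this
  -- the angle
  set θ : ℝ → ℝ := fun t => (z 0).arg + (L t).im with hθdef
  have hθ0 : θ 0 = (z 0).arg := by simp [hθdef, hL0]
  have hθ' : ∀ t, HasDerivAt θ ((g t).im) t := by
    intro t
    have h1 : HasDerivAt (fun s => (L s).im) ((g t).im) t := by
      have := Complex.imCLM.hasFDerivAt.comp_hasDerivAt t (hL t)
      simpa [Function.comp_def] using this
    simpa [hθdef] using h1.const_add ((z 0).arg)
  -- polar decomposition
  set r : ℝ → ℝ := fun t => ‖z 0‖ * Real.exp ((L t).re) with hrdef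
  have hrpos : ∀ t, 0 < r t :=
    fun t => mul_pos (norm_pos_iff.mpr (hzne 0)) (Real.exp_pos _)
  have hzW : ∀ t, z t = (‖z 0‖ : ℂ) * Complex.exp (L t + (z 0).arg * Complex.I) := by
    intro t
    rw [hzL t]
    nth_rewrite 1 [← Complex.norm_mul_exp_arg_mul_I (z 0)]
    rw [mul_assoc, ← Complex.exp_add]
    ring_nf
  have hWim : ∀ t, (L t + (z 0).arg * Complex.I).im = θ t := by
    intro t; simp [hθdef]; ring
  have hWre : ∀ t, (L t + (z 0).arg * Complex.I).re = (L t).re := by intro t; simp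
  have hcos : ∀ t, c0 t = r t * Real.cos (θ t) := by
    intro t
    have := congrArg Complex.re (hzW t)
    rw [hzre t, Complex.re_ofReal_mul, Complex.exp_re, hWre, hWim] at this
    rw [this, hrdef]; ring
  have hsin : ∀ t, c1 t = r t * Real.sin (θ t) := by
    intro t
    have := congrArg Complex.im (hzW t)
    rw [hzim t, Complex.im_ofReal_mul, Complex.exp_im, hWre, hWim] at this
    rw [this, hrdef]; ring
  -- the ODE for θ
  have hode : ∀ t, HasDerivAt θ (Real.cos (θ t) ^ 2 + dd t * Real.sin (θ t) ^ 2) t := by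
    intro t
    have h1 : (g t).im = Real.cos (θ t) ^ 2 + dd t * Real.sin (θ t) ^ 2 := by
      have hns : Complex.normSq (z t) ≠ 0 := by
        simpa [Complex.normSq_eq_norm_sq] using pow_ne_zero 2 (norm_ne_zero_iff.mpr (hzne t))
      have hnsval : Complex.normSq (z t) = c0 t ^ 2 + c1 t ^ 2 := by
        rw [Complex.normSq_apply, hzre, hzim]; ring
      have hzdre : (zd t).re = -(dd t) * c1 t := by simp [hzddef]
      have hzdim : (zd t).im = c0 t := by simp [hzddef]
      rw [hgdef]
      rw [Complex.div_im, hzdre, hzdim, hzre, hzim, hnsval]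
      rw [hcos t, hsin t]
      have hA : (r t * Real.cos (θ t)) ^ 2 + (r t * Real.sin (θ t)) ^ 2 = r t ^ 2 := by
        nlinarith [Real.sin_sq_add_cos_sq (θ t)]
      rw [hA]
      have hr := (hrpos t).ne'
      field_simp
      ring
    rw [← h1]; exact hθ' t
  -- endpoint
  have hz2π : z (2*π) = -(z 0) := by
    have h0 : c0 (2*π) = -(w 0) := by
      have := congrFun hev 0
      rw [hmulvec (2*π)] at this
      simpa using this
    have h1 : c1 (2*π) = -(w 1) := by
      have := congrFun hev 1
      rw [hmulvec (2*π)] at this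
      simpa using this
    have hz00 : c0 0 = w 0 := by simp [hc0def, hγ.1, Matrix.one_apply]
    have hz01 : c1 0 = w 1 := by simp [hc1def, hγ.1, Matrix.one_apply]
    simp [hzdef, h0, h1, hz00, hz01]
    ring
  have hexpL : Complex.exp (L (2*π)) = -1 := by
    have := hzL (2*π)
    rw [hz2π] at this
    have hz0 := hzne 0
    -- this : -(z 0) = z 0 * exp (L 2π) or so; solve
    have h2 : z 0 * Complex.exp (L (2 * π)) = z 0 * (-1) := by
      rw [← this]; ring
    exact mul_left_cancel₀ hz0 h2
  obtain ⟨n, hn⟩ := exp_eq_neg_one_im hexpL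
  have hθ2π : θ (2*π) = θ 0 + (π + 2*π*n) := by
    have h : θ (2*π) = (z 0).arg + (L (2*π)).im := rfl
    rw [h, hn, hθ0]
  -- barrier : lower bound
  set α := (z 0).arg with hαdef
  set m : ℝ := if α < 0 then -π else 0 with hmdef
  have hm : Real.sin m = 0 := by
    rw [hmdef]; split_ifs <;> simp [Real.sin_neg, Real.sin_pi]
  have hm0 : m ≤ θ 0 := by
    rw [hθ0, hmdef]
    split_ifs with h
    · exact (Complex.neg_pi_lt_arg _).le
    · exact not_lt.mp h
  have hml : α - π ≤ m := by
    rw [hmdef]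
    split_ifs with h
    · linarith
    · linarith [Complex.arg_le_pi (z 0)]
  have hbar := barrier hode hm hm0 (2*π) Real.two_pi_pos
  -- upper bound via comparison with the β = 0 flow
  have hK : ∀ t, |1 - dd t| ≤ 1/(1-e) := by
    intro t
    have h1 : 1 - dd t = β / (1 + e * Real.cos t) := by rw [hdddef]; ring
    rw [h1, abs_of_nonneg (le_of_lt (div_pos hβ0 (hden t)))]
    apply div_le_div₀ zero_le_one hβ1 (by linarith)
    nlinarith [Real.neg_one_le_cos t]
  have hgt : ∀ t, dd t < 1 := by
    intro t
    rw [hdddef]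
    simp only
    linarith [div_pos hβ0 (hden t)]
  have hψ : ∀ t : ℝ, HasDerivAt (fun t => θ 0 + t)
      (Real.cos (θ 0 + t) ^ 2 + (fun _ : ℝ => (1:ℝ)) t * Real.sin (θ 0 + t) ^ 2) t := by
    intro t
    have h1 : Real.cos (θ 0 + t) ^ 2 + (fun _ : ℝ => (1:ℝ)) t * Real.sin (θ 0 + t) ^ 2 = 1 := by
      simp only [one_mul]
      nlinarith [Real.sin_sq_add_cos_sq (θ 0 + t)]
    rw [h1]
    simpa using (hasDerivAt_id t).const_add (θ 0)
  have hcomp := sturm_compare hψ hode hK hgt (by simp) Real.two_pi_pos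
  -- conclude n = 0
  have hn0 : n = 0 := by
    have hb1 : (-1 : ℝ) < (n : ℝ) := by
      have := hbar
      rw [hθ2π, hθ0] at this
      nlinarith [Real.pi_pos]
    have hb2 : (n : ℝ) < 1 := by
      have := hcomp
      rw [hθ2π] at this
      nlinarith [Real.pi_pos]
    have h1 : (-1 : ℤ) < n := by exact_mod_cast hb1
    have h2 : n < (1 : ℤ) := by exact_mod_cast hb2
    omega
  have hz0eq : z 0 = (w 0 : ℂ) + (w 1 : ℂ) * Complex.I := by
    have hz00 : c0 0 = w 0 := by simp [hc0def, hγ.1, Matrix.one_apply]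
    have hz01 : c1 0 = w 1 := by simp [hc1def, hγ.1, Matrix.one_apply]
    simp [hzdef, hz00, hz01]
  refine ⟨θ, ?_, hode, ?_⟩
  · rw [hθ0, hαdef, hz0eq]
  · rw [hθ2π, hn0]
    push_cast
    ring


lemma no_coexist {e β β' : ℝ} (he0 : 0 ≤ e) (he1 : e < 1)
    (hβ : β ∈ Set.Ioo (0:ℝ) 1) (hβ' : β' ∈ Set.Ioo (0:ℝ) 1) (hlt : β < β')
    {γ γ' : ℝ → Matrix (Fin 2) (Fin 2) ℝ} (hγ : IsFundSol β e γ) (hγ' : IsFundSol β' e γ')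
    {w : Fin 2 → ℝ} (hw : w ≠ 0)
    (h1 : (γ (2*π)).mulVec w = -w) (h2 : (γ' (2*π)).mulVec w = -w) : False := by
  obtain ⟨θa, ha0, haode, ha2π⟩ := advance_pi he0 he1 hβ.1 hβ.2.le hγ hw h1
  obtain ⟨θb, hb0, hbode, hb2π⟩ := advance_pi he0 he1 hβ'.1 hβ'.2.le hγ' hw h2
  have hden := denom_pos he0 he1
  have hK : ∀ t, |1 - (1 - β' / (1 + e * Real.cos t))| ≤ 1/(1-e) := by
    intro t
    have h1' : 1 - (1 - β' / (1 + e * Real.cos t)) = β' / (1 + e * Real.cos t) := by ring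
    rw [h1', abs_of_nonneg (le_of_lt (div_pos hβ'.1 (hden t)))]
    apply div_le_div₀ zero_le_one hβ'.2.le (by linarith)
    nlinarith [Real.neg_one_le_cos t]
  have hgt : ∀ t, (1 - β' / (1 + e * Real.cos t)) < (1 - β / (1 + e * Real.cos t)) := by
    intro t
    have := (div_lt_div_iff_of_pos_right (hden t)).mpr hlt
    linarith
  have hcmp := sturm_compare haode hbode hK hgt (by rw [ha0, hb0]) Real.two_pi_pos
  rw [ha2π, hb2π, ha0, hb0] at hcmp
  exact lt_irrefl _ hcmp

end AuxiliaryLemmas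

/-- on the two `-1`-degenerate curves, the monodromy matrix `M` has `-1` as a
double eigenvalue (`tr M = -2`, `det M = 1`), `M ≠ -I₂`, `M` is not diagonalizable over `ℂ`;
it is spectrally stable but linearly unstable. -/
theorem stmt_16 (e : ℝ) (he : e ∈ Set.Ico (0 : ℝ) 1)
    (β₁ β₂ : ℝ) (hβ₁ : β₁ ∈ Set.Ioo (0 : ℝ) 1) (hβ₂ : β₂ ∈ Set.Ioo (0 : ℝ) 1)
    (hlt : β₁ < β₂)
    (γ : ℝ → ℝ → Matrix (Fin 2) (Fin 2) ℝ)
    (hγ : ∀ β ∈ Set.Icc (0 : ℝ) 1, IsFundSol β e (γ β))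
    (hdeg : ∀ β ∈ Set.Icc (0 : ℝ) 1,
      (Matrix.det (γ β (2 * π) + 1) = 0 ↔ β = β₁ ∨ β = β₂)) :
    ∀ b ∈ ({β₁, β₂} : Set ℝ),
      Matrix.trace (γ b (2 * π)) = -2 ∧
      Matrix.det (γ b (2 * π)) = 1 ∧
      γ b (2 * π) ≠ -1 ∧
      ¬(∃ (P : Matrix (Fin 2) (Fin 2) ℂ) (dg : Fin 2 → ℂ), IsUnit P.det ∧
          (γ b (2 * π)).map (fun x => (x : ℂ)) = P * Matrix.diagonal dg * P⁻¹) ∧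
      (∀ μ : ℂ, Matrix.det ((γ b (2 * π)).map (fun x => (x : ℂ)) - μ • 1) = 0 → ‖μ‖ = 1) ∧
      ¬∃ C : ℝ, ∀ n : ℕ, ‖γ b (2 * π) ^ n‖ ≤ C := by
  intro b hb
  have hb' : b = β₁ ∨ b = β₂ := by
    rcases hb with h | h
    · exact Or.inl h
    · exact Or.inr h
  have hbIoo : b ∈ Set.Ioo (0:ℝ) 1 := by rcases hb' with rfl | rfl <;> assumption
  have hbIcc : b ∈ Set.Icc (0:ℝ) 1 := ⟨hbIoo.1.le, hbIoo.2.le⟩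
  set M := γ b (2 * π) with hMdef
  -- determinant
  have hdet2 : M 0 0 * M 1 1 - M 0 1 * M 1 0 = 1 := fund_det (hγ b hbIcc) (2*π)
  have hdetM : Matrix.det M = 1 := by rw [Matrix.det_fin_two]; exact hdet2
  -- degeneracy
  have hdeg0 : Matrix.det (M + 1) = 0 := (hdeg b hbIcc).mpr hb'
  -- trace
  have htr2 : M 0 0 + M 1 1 = -2 := by
    rw [Matrix.det_fin_two] at hdeg0
    simp only [Matrix.add_apply, Matrix.one_apply] at hdeg0
    norm_num at hdeg0
    nlinarith [hdeg0, hdet2]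
  have htrM : Matrix.trace M = -2 := by rw [Matrix.trace_fin_two]; exact htr2
  -- M ≠ -1
  have hMne : M ≠ -1 := by
    intro hMeq
    -- eigenvector at the other degenerate point
    have hb2Icc : β₂ ∈ Set.Icc (0:ℝ) 1 := ⟨hβ₂.1.le, hβ₂.2.le⟩
    have hb1Icc : β₁ ∈ Set.Icc (0:ℝ) 1 := ⟨hβ₁.1.le, hβ₁.2.le⟩
    have hbother : ∃ b' , (b' = β₁ ∨ b' = β₂) ∧ b' ≠ b := by
      rcases hb' with rfl | rfl
      · exact ⟨β₂, Or.inr rfl, (ne_of_gt hlt)⟩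
      · exact ⟨β₁, Or.inl rfl, (ne_of_lt hlt)⟩
    obtain ⟨b', hb'mem, hb'ne⟩ := hbother
    have hb'Ioo : b' ∈ Set.Ioo (0:ℝ) 1 := by rcases hb'mem with rfl | rfl <;> assumption
    have hb'Icc : b' ∈ Set.Icc (0:ℝ) 1 := ⟨hb'Ioo.1.le, hb'Ioo.2.le⟩
    set M' := γ b' (2 * π) with hM'def
    have hdeg0' : Matrix.det (M' + 1) = 0 := (hdeg b' hb'Icc).mpr hb'mem
    obtain ⟨w, hw0, hww⟩ := Matrix.exists_mulVec_eq_zero_iff.mpr hdeg0'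
    have hev' : M'.mulVec w = -w := by
      rw [Matrix.add_mulVec, Matrix.one_mulVec] at hww
      exact eq_neg_of_add_eq_zero_left hww
    have hev : M.mulVec w = -w := by
      rw [hMeq, Matrix.neg_mulVec, Matrix.one_mulVec]
    have hev1 : (γ β₁ (2*π)).mulVec w = -w := by
      rcases hb' with rfl | rfl
      · exact hev
      · rcases hb'mem with rfl | rfl
        · exact hev'
        · exact absurd rfl hb'ne
    have hev2 : (γ β₂ (2*π)).mulVec w = -w := by
      rcases hb' with rfl | rfl
      · rcases hb'mem with rfl | rfl
        · exact absurd rfl hb'ne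
        · exact hev'
      · exact hev
    exact no_coexist he.1 he.2 hβ₁ hβ₂ hlt (hγ β₁ hb1Icc) (hγ β₂ hb2Icc) hw0 hev1 hev2
  refine ⟨htrM, hdetM, hMne, ?_, ?_, ?_⟩
  -- not diagonalizable
  · rintro ⟨P, dg, hP, hPD⟩
    set Mc := M.map (fun x => (x : ℂ)) with hMcdef
    have htrMc : Mc 0 0 + Mc 1 1 = -2 := by
      simp only [hMcdef, Matrix.map_apply]
      exact_mod_cast htr2
    have hdetMc : Mc 0 0 * Mc 1 1 - Mc 0 1 * Mc 1 0 = 1 := by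
      simp only [hMcdef, Matrix.map_apply]
      exact_mod_cast hdet2
    have hPinv : P * P⁻¹ = 1 := Matrix.mul_nonsing_inv P hP
    have hPinv' : P⁻¹ * P = 1 := Matrix.nonsing_inv_mul P hP
    have htrD : dg 0 + dg 1 = -2 := by
      have h1 : Matrix.trace Mc = Matrix.trace (P * Matrix.diagonal dg * P⁻¹) := by rw [hPD]
      rw [Matrix.trace_mul_cycle, hPinv', Matrix.one_mul, Matrix.trace_diagonal] at h1
      rw [Matrix.trace_fin_two, htrMc] at h1
      rw [← Fin.sum_univ_two (f := dg)]
      exact h1.symm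
    have hdetD : dg 0 * dg 1 = 1 := by
      have h1 : Matrix.det Mc = Matrix.det (P * Matrix.diagonal dg * P⁻¹) := by rw [hPD]
      rw [Matrix.det_mul, Matrix.det_mul, Matrix.det_nonsing_inv] at h1
      have h2 : Matrix.det Mc = 1 := by rw [Matrix.det_fin_two]; exact hdetMc
      rw [h2] at h1
      have h3 : P.det * (Matrix.diagonal dg).det * Ring.inverse P.det
          = (Matrix.diagonal dg).det * (P.det * Ring.inverse P.det) := by ring
      rw [h3, Ring.mul_inverse_cancel _ hP, mul_one] at h1
      rw [Matrix.det_diagonal, Fin.prod_univ_two] at h1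
      exact h1.symm
    have hdg : dg 0 = -1 ∧ dg 1 = -1 := by
      have h1 : (dg 0 + 1) * (dg 1 + 1) = 0 := by linear_combination hdetD + htrD
      rcases mul_eq_zero.mp h1 with h | h
      · have h0 : dg 0 = -1 := by linear_combination h
        exact ⟨h0, by linear_combination htrD - h⟩
      · have h0 : dg 1 = -1 := by linear_combination h
        exact ⟨by linear_combination htrD - h, h0⟩
    have hDneg : Matrix.diagonal dg = (-1 : Matrix (Fin 2) (Fin 2) ℂ) := by
      ext i j
      rcases eq_or_ne i j with rfl | hij
      · rw [Matrix.diagonal_apply_eq]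
        fin_cases i
        · simp [hdg.1, Matrix.one_apply]
        · simp [hdg.2, Matrix.one_apply]
      · rw [Matrix.diagonal_apply_ne _ hij]
        simp [Matrix.one_apply, hij]
    rw [hDneg] at hPD
    have hMc1 : Mc = -1 := by
      rw [hPD]
      have : P * (-1 : Matrix (Fin 2) (Fin 2) ℂ) * P⁻¹ = -(P * P⁻¹) := by
        rw [Matrix.mul_neg, Matrix.mul_one, Matrix.neg_mul]
      rw [this, hPinv]
    apply hMne
    ext i j
    have h := congrFun (congrFun hMc1 i) j
    simp only [hMcdef, Matrix.map_apply, Matrix.neg_apply, Matrix.one_apply] at h ⊢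
    split_ifs at h ⊢ <;> exact_mod_cast h
  -- spectral stability
  · intro μ hμ
    rw [Matrix.det_fin_two] at hμ
    simp only [Matrix.sub_apply, Matrix.map_apply, Matrix.smul_apply, Matrix.one_apply,
      smul_eq_mul] at hμ
    norm_num at hμ
    have htrC : (M 0 0 : ℂ) + (M 1 1 : ℂ) = -2 := by exact_mod_cast htr2
    have hdetC : (M 0 0 : ℂ) * (M 1 1 : ℂ) - (M 0 1 : ℂ) * (M 1 0 : ℂ) = 1 := by
      exact_mod_cast hdet2
    have hsq : (μ + 1) ^ 2 = 0 := by linear_combination hμ + μ * htrC - hdetC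
    have hμ1 : μ = -1 := by
      have h := pow_eq_zero_iff (n := 2) (by norm_num) |>.mp hsq
      exact eq_neg_of_add_eq_zero_left h
    rw [hμ1]
    simp
  -- linear instability
  · rintro ⟨C, hC⟩
    set N := M + 1 with hNdef
    have hN2 : N * N = 0 := by
      have hsimp : ∀ i j : Fin 2, (N * N) i j = (M i 0 + (1:Matrix (Fin 2) (Fin 2) ℝ) i 0)
          * (M 0 j + (1:Matrix (Fin 2) (Fin 2) ℝ) 0 j)
          + (M i 1 + (1:Matrix (Fin 2) (Fin 2) ℝ) i 1)
          * (M 1 j + (1:Matrix (Fin 2) (Fin 2) ℝ) 1 j) := by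
        intro i j
        simp [hNdef, Matrix.mul_apply, Fin.sum_univ_two, Matrix.add_apply]
      ext i j
      rw [hsimp i j, Matrix.zero_apply]
      fin_cases i <;> fin_cases j <;> simp [Matrix.one_apply]
      · linear_combination (M 0 0) * htr2 - hdet2
      · linear_combination (M 0 1) * htr2
      · linear_combination (M 1 0) * htr2
      · linear_combination (M 1 1) * htr2 - hdet2
    have hNne : N ≠ 0 := by
      intro h
      apply hMne
      have hM : M = N - 1 := by rw [hNdef]; abel
      rw [hM, h]
      abel
    have hNpos : 0 < ‖N‖ := norm_pos_iff.mpr hNne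
    have hpow : ∀ n : ℕ,
        M ^ n = ((-1:ℝ)) ^ n • ((1 : Matrix (Fin 2) (Fin 2) ℝ) - (n:ℝ) • N) := by
      intro n
      induction n with
      | zero => simp
      | succ n ih =>
        have hMN : M = N - 1 := by rw [hNdef]; abel
        rw [pow_succ, ih, hMN, smul_mul_assoc]
        have hkey : ((1 : Matrix (Fin 2) (Fin 2) ℝ) - (n:ℝ) • N) * (N - 1)
            = -((1 : Matrix (Fin 2) (Fin 2) ℝ) - ((n:ℝ)+1) • N) := by
          rw [sub_mul, one_mul, mul_sub, mul_one, smul_mul_assoc, hN2, smul_zero,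
            add_smul, one_smul]
          abel
        rw [hkey]
        push_cast
        rw [pow_succ, mul_smul, neg_one_smul, smul_neg]
    obtain ⟨n, hn⟩ := exists_nat_gt ((C + ‖(1 : Matrix (Fin 2) (Fin 2) ℝ)‖) / ‖N‖)
    have hnorm : ‖M ^ n‖ = ‖(1 : Matrix (Fin 2) (Fin 2) ℝ) - (n:ℝ) • N‖ := by
      rw [hpow n, norm_smul]
      simp [abs_pow]
    have hlow : (n:ℝ) * ‖N‖ - ‖(1 : Matrix (Fin 2) (Fin 2) ℝ)‖ ≤ ‖M ^ n‖ := by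
      rw [hnorm]
      have h1 : ‖(n:ℝ) • N‖ = (n:ℝ) * ‖N‖ := by
        rw [norm_smul]; simp
      calc (n:ℝ) * ‖N‖ - ‖(1 : Matrix (Fin 2) (Fin 2) ℝ)‖
          = ‖(n:ℝ) • N‖ - ‖(1 : Matrix (Fin 2) (Fin 2) ℝ)‖ := by rw [h1]
        _ ≤ ‖(n:ℝ) • N - 1‖ := norm_sub_norm_le _ _
        _ = ‖(1 : Matrix (Fin 2) (Fin 2) ℝ) - (n:ℝ) • N‖ := norm_sub_rev _ _
    have hn2 : C + ‖(1 : Matrix (Fin 2) (Fin 2) ℝ)‖ < n * ‖N‖ := by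
      rwa [div_lt_iff₀ hNpos] at hn
    linarith [hC n]
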